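/- Let 𝒪 be a commutative local ring with maximal ideal 𝔪 and residue field κ = 𝒪/𝔪, let R be a valuation subring of κ, and let A ⊆ 𝒪 be the preimage of R under the residue map 𝒪 → κ (so A is isomorphic to the fiber product R ×_κ 𝒪, and A is a local ring). If A is a henselian local ring, then 𝒪 is a henselian local ring. -/

import Mathlib

open Polynomial IsLocalRing Finset

/-- Let `𝒪` be a local ring with residue field `κ`, `R` a valuation subring of `κ`, and
`A ⊆ 𝒪` the preimage of `R` under the residue map (a semi-valuation ring).  If `A` is a
henselian local ring, then so is `𝒪`. -/
theorem henselianLocalRing_of_semivaluation_henselian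
    {𝒪 : Type*} [CommRing 𝒪] [IsLocalRing 𝒪]
    (R : ValuationSubring (IsLocalRing.ResidueField 𝒪))
    (h : HenselianLocalRing (Subring.comap (IsLocalRing.residue 𝒪) R.toSubring)) :
    HenselianLocalRing 𝒪 := by
  set Asub : Subring 𝒪 := Subring.comap (IsLocalRing.residue 𝒪) R.toSubring with hAsub
  haveI := h
  -- the maximal ideal of 𝒪 is contained in the subring
  have hmemA : ∀ x : 𝒪, x ∈ maximalIdeal 𝒪 → x ∈ Asub := by
    intro x hx
    rw [hAsub, Subring.mem_comap, (IsLocalRing.residue_eq_zero_iff x).mpr hx]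
    exact zero_mem _
  -- elements of Asub that are nonunits in 𝒪 are in the maximal ideal of Asub
  have hmemMax : ∀ x : Asub, (x : 𝒪) ∈ maximalIdeal 𝒪 → x ∈ maximalIdeal Asub := by
    intro x hx
    rw [IsLocalRing.mem_maximalIdeal, mem_nonunits_iff]
    intro hu
    exact (mem_nonunits_iff.mp ((IsLocalRing.mem_maximalIdeal _).mp hx)) (hu.map Asub.subtype)
  constructor
  intro f hf a₀ hfa hderiv
  set n := f.natDegree with hn
  -- the degree is at least 1
  have hn0 : n ≠ 0 := by
    intro h0
    have : f = 1 := (Polynomial.Monic.natDegree_eq_zero hf).mp h0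
    rw [this, eval_one] at hfa
    exact (mem_nonunits_iff.mp ((IsLocalRing.mem_maximalIdeal _).mp hfa)) isUnit_one
  by_cases hn1 : n = 1
  · -- linear case
    have hfx : f = X + C (f.coeff 0) := hf.eq_X_add_C hn1
    refine ⟨-f.coeff 0, ?_, ?_⟩
    · rw [IsRoot, hfx]; simp
    · have : f.eval a₀ = a₀ + f.coeff 0 := by rw [hfx]; simp
      have h2 : -f.coeff 0 - a₀ = -(f.eval a₀) := by rw [this]; ring
      rw [h2]
      exact neg_mem hfa
  -- main case : n ≥ 2
  have hn2 : 2 ≤ n := by omega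
  set m : 𝒪 := f.eval a₀ with hm
  set u : 𝒪ˣ := hderiv.unit with hu
  set v : 𝒪 := ((u⁻¹ : 𝒪ˣ) : 𝒪) with hv
  have huv : (u : 𝒪) * v = 1 := Units.mul_inv u
  have hueq : (u : 𝒪) = f.derivative.eval a₀ := hderiv.unit_spec
  set d : ℕ → 𝒪 := fun i => (Polynomial.taylor a₀ f).coeff i with hd
  set e : ℕ → 𝒪 := fun i => d i * m ^ (i - 1) * v ^ i with he
  have hemem : ∀ i, 2 ≤ i → e i ∈ maximalIdeal 𝒪 := by
    intro i hi
    exact Ideal.mul_mem_right _ _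
      (Ideal.mul_mem_left _ _ ((maximalIdeal 𝒪).pow_mem_of_mem hfa _ (by omega)))
  set E : ℕ → Asub := fun i => if h2 : 2 ≤ i then ⟨e i, hmemA _ (hemem i h2)⟩ else 1 with hE
  have hEmax : ∀ i, 2 ≤ i → E i ∈ maximalIdeal Asub := by
    intro i hi
    have : E i = ⟨e i, hmemA _ (hemem i hi)⟩ := by rw [hE]; simp [hi]
    rw [this]
    exact hmemMax _ (hemem i hi)
  set H : Polynomial Asub :=
    X ^ n + X ^ (n - 1) + ∑ i ∈ Finset.Ico 2 (n + 1), C (E i) * X ^ (n - i) with hH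
  -- H is monic
  have hHmonic : H.Monic := by
    rw [hH, add_assoc]
    apply monic_X_pow_add
    apply lt_of_le_of_lt (degree_add_le _ _)
    rw [max_lt_iff]
    constructor
    · rw [degree_X_pow]
      exact_mod_cast (show n - 1 < n by omega)
    · apply lt_of_le_of_lt (degree_sum_le _ _)
      rw [Finset.sup_lt_iff (by exact_mod_cast WithBot.bot_lt_coe n)]
      intro i hi
      apply lt_of_le_of_lt (degree_C_mul_X_pow_le _ _)
      have h2i : 2 ≤ i := (Finset.mem_Ico.mp hi).1
      exact_mod_cast (show n - i < n by omega)
  -- H(-1) is in the maximal ideal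
  have hHval : H.eval (-1) ∈ maximalIdeal Asub := by
    rw [hH]
    simp only [eval_add, eval_pow, eval_X, eval_finset_sum, eval_mul, eval_C]
    have hpow : (-1 : Asub) ^ n + (-1 : Asub) ^ (n - 1) = 0 := by
      have h1 : (-1 : Asub) ^ n = (-1) ^ (n - 1) * (-1) := by
        rw [← pow_succ]; congr 1; omega
      rw [h1]; ring
    rw [hpow, zero_add]
    apply Ideal.sum_mem
    intro i hi
    exact Ideal.mul_mem_right _ _ (hEmax i (Finset.mem_Ico.mp hi).1)
  -- the derivative of H at -1 is a unit
  have hHderiv : IsUnit (H.derivative.eval (-1)) := by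
    rw [hH]
    simp only [derivative_add, derivative_X_pow, derivative_sum, derivative_C_mul_X_pow,
      eval_add, eval_mul, eval_C, eval_pow, eval_X, eval_finset_sum]
    have hmain : ((n : Asub)) * (-1) ^ (n - 1) + ((n - 1 : ℕ) : Asub) * (-1) ^ (n - 1 - 1)
        = -(-1) ^ (n - 2) := by
      have h1 : (-1 : Asub) ^ (n - 1) = (-1) ^ (n - 2) * (-1) := by
        rw [← pow_succ]; congr 1; omega
      have h2 : n - 1 - 1 = n - 2 := by omega
      have h3 : ((n : ℕ) : Asub) = ((n - 1 : ℕ) : Asub) + 1 := by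
        exact_mod_cast congrArg (Nat.cast : ℕ → Asub) (show n = (n - 1) + 1 by omega)
      rw [h1, h2, h3]
      ring
    rw [hmain]
    by_contra hnu
    have hmem1 : -(-1 : Asub) ^ (n - 2) + ∑ i ∈ Finset.Ico 2 (n + 1),
        E i * ((n - i : ℕ) : Asub) * (-1) ^ (n - i - 1) ∈ maximalIdeal Asub := by
      rw [IsLocalRing.mem_maximalIdeal, mem_nonunits_iff]; exact hnu
    have hmem2 : ∑ i ∈ Finset.Ico 2 (n + 1),
        E i * ((n - i : ℕ) : Asub) * (-1) ^ (n - i - 1) ∈ maximalIdeal Asub := by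
      apply Ideal.sum_mem
      intro i hi
      exact Ideal.mul_mem_right _ _ (Ideal.mul_mem_right _ _ (hEmax i (Finset.mem_Ico.mp hi).1))
    have hmem3 : -(-1 : Asub) ^ (n - 2) ∈ maximalIdeal Asub := by
      have := Ideal.sub_mem _ hmem1 hmem2
      simpa using this
    have : IsUnit (-(-1 : Asub) ^ (n - 2)) := (isUnit_one.neg.pow _).neg
    exact (mem_nonunits_iff.mp ((IsLocalRing.mem_maximalIdeal _).mp hmem3)) this
  -- apply Henselianity of Asub
  obtain ⟨z₁, hz₁root, hz₁near⟩ := h.is_henselian H hHmonic (-1) hHval hHderiv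
  -- z₁ is a unit of Asub
  have hz₁unit : IsUnit z₁ := by
    by_contra hnu
    have h1 : z₁ ∈ maximalIdeal Asub := by
      rw [IsLocalRing.mem_maximalIdeal, mem_nonunits_iff]; exact hnu
    have h2 : (1 : Asub) ∈ maximalIdeal Asub := by
      have : (1 : Asub) = (z₁ - -1) - z₁ := by ring
      rw [this]
      exact Ideal.sub_mem _ hz₁near h1
    exact (mem_nonunits_iff.mp ((IsLocalRing.mem_maximalIdeal _).mp h2)) isUnit_one
  obtain ⟨ζ, hζ⟩ := hz₁unit
  set w : Asub := ((ζ⁻¹ : Asubˣ) : Asub) with hw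
  have hzw : z₁ * w = 1 := by rw [← hζ, hw]; exact ζ.mul_inv
  set z : 𝒪 := (z₁ : 𝒪) with hz
  set wO : 𝒪 := (w : 𝒪) with hwO
  have hzwO : z * wO = 1 := by
    rw [hz, hwO, ← Subring.coe_mul, hzw, Subring.coe_one]
  -- push the root equation down to 𝒪
  have hHz : z ^ n + z ^ (n - 1) + ∑ i ∈ Finset.Ico 2 (n + 1), e i * z ^ (n - i) = 0 := by
    have h0 : (Asub.subtype (H.eval z₁) : 𝒪) = 0 := by rw [hz₁root]; simp
    rw [hH] at h0
    simp only [eval_add, eval_pow, eval_X, eval_finset_sum, eval_mul, eval_C,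
      map_add, map_pow, map_sum, map_mul] at h0
    rw [← h0]
    congr 1
    apply Finset.sum_congr rfl
    intro i hi
    have h2i : 2 ≤ i := (Finset.mem_Ico.mp hi).1
    congr 1
    rw [hE]
    simp [h2i]
  -- Taylor expansion of f
  have hev : ∀ y : 𝒪, f.eval (a₀ + y) = ∑ i ∈ Finset.range (n + 1), d i * y ^ i := by
    intro y
    have h1 : f.eval (a₀ + y) = (Polynomial.taylor a₀ f).eval y := by
      rw [Polynomial.taylor_eval, add_comm]
    rw [h1]
    exact eval_eq_sum_range' (by rw [natDegree_taylor]; omega) y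
  set c : 𝒪 := m * v with hc
  set a : 𝒪 := a₀ + c * wO with ha
  have key : z ^ n * f.eval a = 0 := by
    rw [ha, hev (c * wO), Finset.mul_sum]
    have step1 : ∀ i ∈ Finset.range (n + 1),
        z ^ n * (d i * (c * wO) ^ i) = d i * c ^ i * z ^ (n - i) := by
      intro i hi
      have hile : i ≤ n := Nat.lt_succ_iff.mp (Finset.mem_range.mp hi)
      have hzn : z ^ n = z ^ (n - i) * z ^ i := by
        rw [← pow_add]; congr 1; omega
      have hzw1 : z ^ i * wO ^ i = 1 := by rw [← mul_pow, hzwO, one_pow]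
      calc z ^ n * (d i * (c * wO) ^ i)
          = d i * c ^ i * (z ^ (n - i) * (z ^ i * wO ^ i)) := by rw [hzn, mul_pow]; ring
        _ = d i * c ^ i * z ^ (n - i) := by rw [hzw1, mul_one]
    rw [Finset.sum_congr rfl step1]
    rw [Finset.range_eq_Ico, Finset.sum_eq_sum_Ico_succ_bot (by omega : 0 < n + 1),
      Finset.sum_eq_sum_Ico_succ_bot (by omega : 1 < n + 1)]
    have hd0 : d 0 = m := Polynomial.taylor_coeff_zero a₀ f
    have hd1c : d 1 * c = m := by
      have : d 1 = f.derivative.eval a₀ := Polynomial.taylor_coeff_one a₀ f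
      rw [this, ← hueq, hc]
      calc (u : 𝒪) * (m * v) = m * ((u : 𝒪) * v) := by ring
        _ = m := by rw [huv, mul_one]
    have hterm : ∀ i ∈ Finset.Ico 2 (n + 1),
        d i * c ^ i * z ^ (n - i) = m * (e i * z ^ (n - i)) := by
      intro i hi
      have h2i : 2 ≤ i := (Finset.mem_Ico.mp hi).1
      have hmi : m ^ i = m * m ^ (i - 1) := by
        conv_lhs => rw [show i = (i - 1) + 1 by omega]
        rw [pow_succ]; ring
      rw [he, hc]
      simp only [mul_pow]
      rw [hmi]; ring
    rw [Finset.sum_congr rfl hterm, ← Finset.mul_sum]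
    rw [hd0, pow_zero, mul_one, Nat.sub_zero, pow_one]
    have harr : d 1 * c * z ^ (n - 1) = m * z ^ (n - 1) := by rw [hd1c]
    rw [harr]
    linear_combination m * hHz
  have hzu : IsUnit (z ^ n) := (IsUnit.of_mul_eq_one wO hzwO).pow n
  refine ⟨a, ?_, ?_⟩
  · exact (hzu.mul_right_eq_zero).mp key
  · rw [ha, add_sub_cancel_left, hc]
    exact Ideal.mul_mem_right _ _ (Ideal.mul_mem_right _ _ hfa)
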